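/- Let D be a central division algebra over C of characteristic p with derivation δ and f(t) = g(t) − d ∈ D[t;δ] as above, and let A = (D,δ,d) be the resulting nonassociative differential extension with Nuc(A) ⊆ D. For every invertible a ∈ Nuc(A), the inner automorphism G_a(h) = (a^{−1}h)a of A equals H_{i_a, a^{−1}δ(a)}, i.e., G_a restricted to D is conjugation x ↦ a^{−1}xa and G_a(t) = t + a^{−1}δ(a). -/

import Mathlib

/-- A differential (Ore) polynomial ring `D[t;δ]`: a ring containing `D` via the
ring embedding `ι`, with an element `t` satisfying `t·a = a·t + δ(a)`, and which is
freely spanned as a left `D`-module by the powers of `t` (via `rep`). -/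
structure DiffPolyRing (D : Type*) [Ring D] (δ : D → D) where
  carrier : Type*
  [ring : Ring carrier]
  ι : D →+* carrier
  t : carrier
  tcomm : ∀ a : D, t * ι a = ι a * t + ι (δ a)
  rep : carrier ≃+ (ℕ →₀ D)
  rep_symm_apply : ∀ c : ℕ →₀ D, rep.symm c = c.sum fun i a => ι a * t ^ i

attribute [instance] DiffPolyRing.ring

namespace DiffPolyRing

variable {D : Type*} [Ring D] {δ : D → D}

/-- The degree of a differential polynomial, with `deg 0 = ⊥`. -/
noncomputable def deg (P : DiffPolyRing D δ) (p : P.carrier) : WithBot ℕ :=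
  (P.rep p).support.max

end DiffPolyRing

namespace DiffPolyRing

variable {D : Type*} [Ring D] {δ : D → D}

variable (P : DiffPolyRing D δ)

lemma rep_iota_mul_t_pow (a : D) (i : ℕ) :
    P.rep (P.ι a * P.t ^ i) = Finsupp.single i a := by
  have h := P.rep_symm_apply (Finsupp.single i a)
  rw [Finsupp.sum_single_index (by simp)] at h
  rw [← h]; simp

lemma eq_rep_sum (p : P.carrier) :
    p = (P.rep p).sum fun i a => P.ι a * P.t ^ i := by
  conv_lhs => rw [← P.rep.symm_apply_apply p, P.rep_symm_apply]

lemma coeff_le_deg {p : P.carrier} {i : ℕ} (h : P.rep p i ≠ 0) :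
    (i : WithBot ℕ) ≤ P.deg p :=
  Finset.le_max (Finsupp.mem_support_iff.mpr h)

lemma coeff_eq_zero {p : P.carrier} {i : ℕ} (h : P.deg p < (i : WithBot ℕ)) :
    P.rep p i = 0 := by
  by_contra hc
  exact absurd (P.coeff_le_deg hc) (not_le_of_gt h)

lemma deg_le_iff {p : P.carrier} {n : WithBot ℕ} :
    P.deg p ≤ n ↔ ∀ i : ℕ, P.rep p i ≠ 0 → (i : WithBot ℕ) ≤ n := by
  unfold deg
  rw [Finset.max_le_iff]
  simp only [Finsupp.mem_support_iff]
  exact Iff.rfl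

lemma deg_lt_iff {p : P.carrier} {c : WithBot ℕ} (hc : ⊥ < c) :
    P.deg p < c ↔ ∀ i : ℕ, P.rep p i ≠ 0 → (i : WithBot ℕ) < c := by
  constructor
  · exact fun h i hi => lt_of_le_of_lt (P.coeff_le_deg hi) h
  · intro h
    rcases hd : P.deg p with _ | n
    · exact hc
    · obtain hn := Finset.mem_of_max hd
      exact h n (Finsupp.mem_support_iff.mp hn)

lemma deg_add_le (p q : P.carrier) :
    P.deg (p + q) ≤ max (P.deg p) (P.deg q) := by
  rw [deg_le_iff]
  intro i hi
  rw [map_add, Finsupp.add_apply] at hi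
  rcases (by by_contra hx; push_neg at hx; simp [hx.1, hx.2] at hi :
      P.rep p i ≠ 0 ∨ P.rep q i ≠ 0) with h | h
  · exact le_max_of_le_left (P.coeff_le_deg h)
  · exact le_max_of_le_right (P.coeff_le_deg h)

lemma deg_zero : P.deg (0 : P.carrier) = ⊥ := by
  unfold deg; rw [map_zero]; simp

lemma deg_iota_le (a : D) : P.deg (P.ι a) ≤ 0 := by
  rw [deg_le_iff]
  intro i hi
  have : P.rep (P.ι a * P.t ^ 0) i ≠ 0 := by simpa using hi
  rw [P.rep_iota_mul_t_pow] at this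
  rcases eq_or_ne i 0 with rfl | h
  · exact le_refl _
  · simp [Finsupp.single_apply, Ne.symm h] at this

lemma deg_iota_t_pow_le (a : D) (i : ℕ) : P.deg (P.ι a * P.t ^ i) ≤ (i : WithBot ℕ) := by
  rw [deg_le_iff]
  intro j hj
  rw [P.rep_iota_mul_t_pow] at hj
  rcases eq_or_ne i j with rfl | h
  · exact le_refl _
  · simp [Finsupp.single_apply, h] at hj

lemma coeff_finsupp_sum (c : ℕ →₀ D) (g : ℕ → D → P.carrier) (k : ℕ) :
    P.rep (c.sum g) k = c.sum fun i a => P.rep (g i a) k := by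
  rw [Finsupp.sum, Finsupp.sum, map_sum, Finset.sum_apply']

lemma deg_finsupp_sum_le (c : ℕ →₀ D) (g : ℕ → D → P.carrier) (n : WithBot ℕ)
    (h : ∀ i ∈ c.support, P.deg (g i (c i)) ≤ n) :
    P.deg (c.sum g) ≤ n := by
  rw [deg_le_iff]
  intro k hk
  rw [P.coeff_finsupp_sum] at hk
  obtain ⟨i, hi, hne⟩ := Finset.exists_ne_zero_of_sum_ne_zero hk
  exact le_trans (P.coeff_le_deg hne) (h i hi)

end DiffPolyRing

namespace DiffPolyRing
variable {D : Type*} [Ring D] {δ : D → D} (P : DiffPolyRing D δ)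

lemma deg_neg (p : P.carrier) : P.deg (-p) = P.deg p := by
  unfold deg; rw [map_neg, Finsupp.support_neg]

lemma deg_iota_mul_le (b : D) (p : P.carrier) : P.deg (P.ι b * p) ≤ P.deg p := by
  conv_lhs => rw [P.eq_rep_sum p, Finsupp.mul_sum]
  refine P.deg_finsupp_sum_le _ _ _ fun i hi => ?_
  rw [← mul_assoc, ← map_mul]
  exact le_trans (P.deg_iota_t_pow_le _ i) (P.coeff_le_deg (Finsupp.mem_support_iff.mp hi))

lemma deg_t_mul_le (p : P.carrier) : P.deg (P.t * p) ≤ P.deg p + 1 := by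
  conv_lhs => rw [P.eq_rep_sum p, Finsupp.mul_sum]
  refine P.deg_finsupp_sum_le _ _ _ fun i hi => ?_
  have e : P.t * (P.ι ((P.rep p) i) * P.t ^ i)
      = P.ι ((P.rep p) i) * P.t ^ (i + 1) + P.ι (δ ((P.rep p) i)) * P.t ^ i := by
    rw [← mul_assoc, P.tcomm, add_mul, mul_assoc, ← pow_succ']
  rw [e]
  have h1 : (i : WithBot ℕ) ≤ P.deg p := P.coeff_le_deg (Finsupp.mem_support_iff.mp hi)
  refine le_trans (P.deg_add_le _ _) (max_le ?_ ?_)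
  · refine le_trans (P.deg_iota_t_pow_le _ _) ?_
    have e2 : ((i + 1 : ℕ) : WithBot ℕ) = (i : WithBot ℕ) + 1 := by push_cast; rfl
    rw [e2]
    exact add_le_add_left h1 1
  · refine le_trans (P.deg_iota_t_pow_le _ _) (le_trans h1 ?_)
    calc P.deg p = P.deg p + 0 := (add_zero _).symm
    _ ≤ P.deg p + 1 := add_le_add_right (by norm_num) _

lemma deg_t_pow_mul_le (n : ℕ) (p : P.carrier) :
    P.deg (P.t ^ n * p) ≤ (n : WithBot ℕ) + P.deg p := by
  induction n with
  | zero => simpa using le_refl (P.deg p)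
  | succ n ih =>
    have e : P.t ^ (n + 1) * p = P.t * (P.t ^ n * p) := by
      rw [pow_succ', mul_assoc]
    rw [e]
    refine le_trans (P.deg_t_mul_le _) (le_trans (add_le_add_left ih 1) (le_of_eq ?_))
    have e2 : ((n + 1 : ℕ) : WithBot ℕ) = (n : WithBot ℕ) + 1 := by push_cast; rfl
    rw [e2, add_right_comm]

lemma deg_mul_le (p q : P.carrier) : P.deg (p * q) ≤ P.deg p + P.deg q := by
  conv_lhs => rw [P.eq_rep_sum p, Finsupp.sum_mul]
  refine P.deg_finsupp_sum_le _ _ _ fun i hi => ?_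
  rw [mul_assoc]
  refine le_trans (P.deg_iota_mul_le _ _) (le_trans (P.deg_t_pow_mul_le i q) ?_)
  exact add_le_add_left (P.coeff_le_deg (Finsupp.mem_support_iff.mp hi)) _

lemma t_pow_comm (n : ℕ) (a : D) :
    ∃ r : P.carrier, P.t ^ n * P.ι a = P.ι a * P.t ^ n + r ∧ P.deg r < (n : WithBot ℕ) := by
  induction n with
  | zero =>
    refine ⟨0, by simp, ?_⟩
    rw [P.deg_zero]
    exact WithBot.bot_lt_coe 0
  | succ n ih =>
    obtain ⟨r, hr, hdr⟩ := ih
    refine ⟨P.ι (δ a) * P.t ^ n + P.t * r, ?_, ?_⟩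
    · calc P.t ^ (n + 1) * P.ι a = P.t * (P.t ^ n * P.ι a) := by rw [pow_succ', mul_assoc]
      _ = P.t * (P.ι a * P.t ^ n) + P.t * r := by rw [hr, mul_add]
      _ = (P.ι a * P.t + P.ι (δ a)) * P.t ^ n + P.t * r := by rw [← mul_assoc, P.tcomm]
      _ = P.ι a * P.t ^ (n + 1) + (P.ι (δ a) * P.t ^ n + P.t * r) := by
          rw [add_mul, mul_assoc, ← pow_succ', add_assoc]
    · refine lt_of_le_of_lt (P.deg_add_le _ _) (max_lt ?_ ?_)
      · refine lt_of_le_of_lt (P.deg_iota_t_pow_le _ _) ?_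
        exact_mod_cast Nat.lt_succ_self n
      · refine lt_of_le_of_lt (P.deg_t_mul_le _) ?_
        have e2 : ((n + 1 : ℕ) : WithBot ℕ) = (n : WithBot ℕ) + 1 := by push_cast; rfl
        rw [e2]
        exact WithBot.add_lt_add_right (by simp) hdr

end DiffPolyRing

namespace DiffPolyRing
variable {D : Type*} [Ring D] {δ : D → D} (P : DiffPolyRing D δ)

lemma deg_t_pow_le (j : ℕ) : P.deg (P.t ^ j) ≤ (j : WithBot ℕ) := by
  have : P.t ^ j = P.ι 1 * P.t ^ j := by rw [map_one, one_mul]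
  rw [this]
  exact P.deg_iota_t_pow_le 1 j

lemma coeff_t_pow_mul_top {f : P.carrier} {m : ℕ} (hf : P.deg f ≤ (m : WithBot ℕ))
    (n : ℕ) (b : D) :
    P.rep (P.ι b * (P.t ^ n * f)) (n + m) = b * P.rep f m := by
  have e : P.ι b * (P.t ^ n * f)
      = (P.rep f).sum fun j c => P.ι b * (P.t ^ n * (P.ι c * P.t ^ j)) := by
    conv_lhs => rw [P.eq_rep_sum f]
    rw [Finsupp.mul_sum, Finsupp.mul_sum]
  rw [e, P.coeff_finsupp_sum]
  have step : ∀ j ∈ (P.rep f).support,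
      P.rep (P.ι b * (P.t ^ n * (P.ι ((P.rep f) j) * P.t ^ j))) (n + m)
        = if j = m then b * (P.rep f) j else 0 := by
    intro j hj
    have hjm : j ≤ m := by
      have := P.coeff_le_deg (Finsupp.mem_support_iff.mp hj)
      exact_mod_cast le_trans this hf
    obtain ⟨r, hr, hdr⟩ := P.t_pow_comm n ((P.rep f) j)
    have e2 : P.ι b * (P.t ^ n * (P.ι ((P.rep f) j) * P.t ^ j))
        = P.ι (b * (P.rep f) j) * P.t ^ (n + j) + P.ι b * (r * P.t ^ j) := by
      rw [← mul_assoc (P.t ^ n), hr, add_mul, mul_add, mul_assoc (P.ι ((P.rep f) j)),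
        ← pow_add, ← mul_assoc, ← map_mul]
    rw [e2, P.rep.map_add, Finsupp.add_apply, P.rep_iota_mul_t_pow]
    have hz : P.rep (P.ι b * (r * P.t ^ j)) (n + m) = 0 := by
      refine P.coeff_eq_zero (lt_of_le_of_lt (le_trans (P.deg_iota_mul_le _ _)
        (le_trans (P.deg_mul_le _ _) (add_le_add_right (P.deg_t_pow_le j) _))) ?_)
      calc P.deg r + (j : WithBot ℕ) < (n : WithBot ℕ) + (j : WithBot ℕ) :=
            WithBot.add_lt_add_right (by simp) hdr
      _ = ((n + j : ℕ) : WithBot ℕ) := by push_cast; rfl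
      _ ≤ ((n + m : ℕ) : WithBot ℕ) := by exact_mod_cast Nat.add_le_add_left hjm n
    rw [hz, add_zero, Finsupp.single_apply]
    by_cases hjm' : j = m
    · simp [hjm']
    · have : n + j ≠ n + m := fun hh => hjm' (Nat.add_left_cancel hh)
      simp [this, hjm']
  rw [Finsupp.sum_congr (g2 := fun j c => if j = m then b * c else 0) step]
  rw [Finsupp.sum_ite_eq' (P.rep f) m fun _ c => b * c]
  by_cases hm : m ∈ (P.rep f).support
  · simp [hm]
  · rw [if_neg hm, Finsupp.notMem_support_iff.mp hm, mul_zero]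

lemma coeff_mul_top {q f : P.carrier} {n m : ℕ} (hq : P.deg q ≤ (n : WithBot ℕ))
    (hf : P.deg f ≤ (m : WithBot ℕ)) :
    P.rep (q * f) (n + m) = P.rep q n * P.rep f m := by
  have e : q * f = (P.rep q).sum fun i a => P.ι a * (P.t ^ i * f) := by
    conv_lhs => rw [P.eq_rep_sum q]
    rw [Finsupp.sum_mul]
    exact Finsupp.sum_congr fun i _ => mul_assoc _ _ _
  rw [e, P.coeff_finsupp_sum]
  have step : ∀ i ∈ (P.rep q).support,
      P.rep (P.ι ((P.rep q) i) * (P.t ^ i * f)) (n + m)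
        = if i = n then (P.rep q) i * P.rep f m else 0 := by
    intro i hi
    have hin : i ≤ n := by
      have := P.coeff_le_deg (Finsupp.mem_support_iff.mp hi)
      exact_mod_cast le_trans this hq
    by_cases hin' : i = n
    · rw [if_pos hin', hin']
      exact P.coeff_t_pow_mul_top hf n _
    · rw [if_neg hin']
      have hlt : i < n := lt_of_le_of_ne hin hin'
      refine P.coeff_eq_zero (lt_of_le_of_lt (le_trans (P.deg_iota_mul_le _ _)
        (le_trans (P.deg_t_pow_mul_le i f) (add_le_add_right hf _))) ?_)
      calc (i : WithBot ℕ) + (m : WithBot ℕ) = ((i + m : ℕ) : WithBot ℕ) := by push_cast; rfl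
      _ < ((n + m : ℕ) : WithBot ℕ) := by exact_mod_cast Nat.add_lt_add_right hlt m
  rw [Finsupp.sum_congr (g2 := fun i c => if i = n then c * P.rep f m else 0) step]
  rw [Finsupp.sum_ite_eq' (P.rep q) n fun _ c => c * P.rep f m]
  by_cases hn : n ∈ (P.rep q).support
  · simp [hn]
  · rw [if_neg hn, Finsupp.notMem_support_iff.mp hn, zero_mul]

end DiffPolyRing

namespace DiffPolyRing
variable {D : Type*} [DivisionRing D] {δ : D → D} (P : DiffPolyRing D δ)

lemma deg_eq_bot_iff {p : P.carrier} : P.deg p = ⊥ ↔ p = 0 := by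
  constructor
  · intro h
    unfold deg at h
    rw [Finset.max_eq_bot] at h
    have : P.rep p = 0 := Finsupp.support_eq_empty.mp h
    rw [← P.rep.symm_apply_apply p, this, map_zero]
  · rintro rfl; exact P.deg_zero

lemma mul_f_eq_zero {f q : P.carrier} (hf : (⊥ : WithBot ℕ) < P.deg f)
    (h : P.deg (q * f) < P.deg f) : q * f = 0 := by
  by_cases hq : q = 0
  · rw [hq, zero_mul]
  obtain ⟨n, hn⟩ : ∃ n : ℕ, P.deg q = (n : WithBot ℕ) := by
    rcases hd : P.deg q with _ | n
    · exact absurd (P.deg_eq_bot_iff.mp hd) hq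
    · exact ⟨n, rfl⟩
  obtain ⟨m, hm⟩ : ∃ m : ℕ, P.deg f = (m : WithBot ℕ) := by
    rcases hd : P.deg f with _ | m
    · rw [hd] at hf; exact absurd hf (lt_irrefl _)
    · exact ⟨m, rfl⟩
  have hqn : P.rep q n ≠ 0 := Finsupp.mem_support_iff.mp (Finset.mem_of_max hn)
  have hfm : P.rep f m ≠ 0 := Finsupp.mem_support_iff.mp (Finset.mem_of_max hm)
  have htop := P.coeff_mul_top (le_of_eq hn) (le_of_eq hm)
  have hne : P.rep (q * f) (n + m) ≠ 0 := htop ▸ mul_ne_zero hqn hfm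
  have h1 : ((n + m : ℕ) : WithBot ℕ) < (m : WithBot ℕ) :=
    lt_of_le_of_lt (P.coeff_le_deg hne) (h.trans_eq hm)
  exact absurd h1 (not_lt.mpr (by exact_mod_cast Nat.le_add_left m n))

end DiffPolyRing

theorem inner_automorphism_eq_H'
    (D : Type*) [DivisionRing D] (δ : D → D)
    (P : DiffPolyRing D δ)
    (f : P.carrier) (hm : (1 : WithBot ℕ) < P.deg f)
    (modf : P.carrier → P.carrier)
    (hmod : ∀ g : P.carrier, P.deg (modf g) < P.deg f ∧ ∃ q, g = q * f + modf g)
    (a : D) (ha : a ≠ 0) :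
    P.ι a⁻¹ * P.t * P.ι a = P.t + P.ι (a⁻¹ * δ a) ∧
    ∀ h : P.carrier, P.deg h < P.deg f →
      modf (modf (P.ι a⁻¹ * h) * P.ι a) =
        (P.rep h).sum fun i b => P.ι (a⁻¹ * b * a) * (P.t + P.ι (a⁻¹ * δ a)) ^ i := by
  have hbot : (⊥ : WithBot ℕ) < P.deg f :=
    lt_trans (by exact WithBot.bot_lt_coe 1) hm
  -- modf is the identity on elements of degree < deg f
  have modf_id : ∀ g : P.carrier, P.deg g < P.deg f → modf g = g := by
    intro g hg
    obtain ⟨hdeg, q, hq⟩ := hmod g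
    have hqf : q * f = g - modf g := eq_sub_of_add_eq hq.symm
    have hdlt : P.deg (q * f) < P.deg f := by
      rw [hqf, sub_eq_add_neg]
      refine lt_of_le_of_lt (P.deg_add_le _ _) (max_lt hg ?_)
      rw [P.deg_neg]; exact hdeg
    have : q * f = 0 := P.mul_f_eq_zero hbot hdlt
    rw [this, zero_add] at hq
    exact hq.symm
  have key : P.ι a⁻¹ * P.t * P.ι a = P.t + P.ι (a⁻¹ * δ a) := by
    rw [mul_assoc, P.tcomm, mul_add, ← mul_assoc, ← map_mul, inv_mul_cancel₀ ha, map_one,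
      one_mul, ← map_mul]
  refine ⟨key, fun h hh => ?_⟩
  have hinv : ∀ x : P.carrier, P.ι a * (P.ι a⁻¹ * x) = x := fun x => by
    rw [← mul_assoc, ← map_mul, mul_inv_cancel₀ ha, map_one, one_mul]
  have pow_eq : ∀ i : ℕ, (P.t + P.ι (a⁻¹ * δ a)) ^ i = P.ι a⁻¹ * P.t ^ i * P.ι a := by
    intro i
    induction i with
    | zero => rw [pow_zero, pow_zero, mul_one, ← map_mul, inv_mul_cancel₀ ha, map_one]
    | succ i ih =>
      rw [pow_succ, ih, ← key]
      simp only [mul_assoc]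
      rw [hinv]
      congr 1
      rw [← mul_assoc, ← pow_succ]
  have main_eq : P.ι a⁻¹ * h * P.ι a =
      (P.rep h).sum fun i b => P.ι (a⁻¹ * b * a) * (P.t + P.ι (a⁻¹ * δ a)) ^ i := by
    conv_lhs => rw [P.eq_rep_sum h]
    rw [Finsupp.mul_sum, Finsupp.sum_mul]
    refine Finsupp.sum_congr fun i _ => ?_
    rw [pow_eq i]
    rw [← mul_assoc, ← mul_assoc, ← map_mul]
    rw [← mul_assoc (P.ι (a⁻¹ * (P.rep h) i * a)), ← map_mul,
      mul_assoc (a⁻¹ * (P.rep h) i), mul_inv_cancel₀ ha, mul_one]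
  have d1 : P.deg (P.ι a⁻¹ * h) < P.deg f :=
    lt_of_le_of_lt (P.deg_iota_mul_le _ _) hh
  have d2 : P.deg (P.ι a⁻¹ * h * P.ι a) < P.deg f := by
    refine lt_of_le_of_lt (le_trans (P.deg_mul_le _ _) ?_) d1
    calc P.deg (P.ι a⁻¹ * h) + P.deg (P.ι a)
        ≤ P.deg (P.ι a⁻¹ * h) + 0 := add_le_add_right (P.deg_iota_le a) _
      _ = P.deg (P.ι a⁻¹ * h) := add_zero _
  rw [modf_id _ d1, modf_id _ d2, main_eq]


/-- for an invertible `a` in the nucleus of `A = (D,δ,d)`, the inner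
automorphism `G_a(h) = (a⁻¹h)a` equals `H_{i_a, a⁻¹δ(a)}`; in particular
`a⁻¹·t·a = t + a⁻¹δ(a)` in `D[t;δ]` and
`G_a(Σ b_i t^i) = Σ a⁻¹b_i a (t + a⁻¹δ(a))^i`. -/
theorem inner_automorphism_eq_H
    (D : Type*) [DivisionRing D] (δ : D → D)
    (hadd : ∀ a b : D, δ (a + b) = δ a + δ b)
    (hmul : ∀ a b : D, δ (a * b) = a * δ b + δ a * b)
    (P : DiffPolyRing D δ)
    (f : P.carrier) (hm : (1 : WithBot ℕ) < P.deg f)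
    (modf : P.carrier → P.carrier)
    (hmod : ∀ g : P.carrier, P.deg (modf g) < P.deg f ∧ ∃ q, g = q * f + modf g)
    (a : D) (ha : a ≠ 0)
    -- `ι a` lies in the nucleus of `S_f`:
    (hnuc : ∀ x y : P.carrier, P.deg x < P.deg f → P.deg y < P.deg f →
      modf (modf (P.ι a * x) * y) = modf (P.ι a * modf (x * y)) ∧
      modf (modf (x * P.ι a) * y) = modf (x * modf (P.ι a * y)) ∧
      modf (modf (x * y) * P.ι a) = modf (x * modf (y * P.ι a))) :
    P.ι a⁻¹ * P.t * P.ι a = P.t + P.ι (a⁻¹ * δ a) ∧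
    ∀ h : P.carrier, P.deg h < P.deg f →
      modf (modf (P.ι a⁻¹ * h) * P.ι a) =
        (P.rep h).sum fun i b => P.ι (a⁻¹ * b * a) * (P.t + P.ι (a⁻¹ * δ a)) ^ i := by
  exact inner_automorphism_eq_H' D δ P f hm modf hmod a ha
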